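/- For every z ∈ (0,S), the improper integral f(z) = ∫₀^z √(2/m(r)) dr is finite; if S < ∞, then also f(S) := ∫₀^S √(2/m(r)) dr is finite; and f is continuous and strictly increasing on its domain. -/

import Mathlib

open MeasureTheory Set Filter Topology

/-- Under condition (M) for `m` on `(0,S)` with `S ∈ (0,∞]`, the improper
integral `f(z) = ∫₀^z √(2/m(r)) dr` is finite for every `z ∈ (0,S)` (i.e. the integrand
is integrable on `(0,z)`); if `S < ∞` then also `f(S)` is finite; and `f` is continuous
and strictly increasing on its domain `{z : 0 ≤ z, z ≤ S}`. -/
theorem f_finite_continuous_strictMono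
    (S : EReal) (hS : 0 < S) (m : ℝ → ℝ)
    (hm_c2 : ContDiffOn ℝ 2 m {z : ℝ | 0 < z ∧ (z : EReal) < S})
    (hm_pos : ∀ z : ℝ, 0 < z → (z : EReal) < S → 0 < m z)
    (hm_conc : ∀ z : ℝ, 0 < z → (z : EReal) < S → deriv (deriv m) z ≤ 0)
    (hm0 : Tendsto m (𝓝[>] (0 : ℝ)) (𝓝 0))
    (hmS : S ≠ ⊤ → Tendsto m (𝓝[<] S.toReal) (𝓝 0)) :
    (∀ z : ℝ, 0 < z → (z : EReal) < S →
      IntegrableOn (fun r => Real.sqrt (2 / m r)) (Ioo 0 z)) ∧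
    (S ≠ ⊤ → IntegrableOn (fun r => Real.sqrt (2 / m r)) (Ioo 0 S.toReal)) ∧
    ContinuousOn (fun z => ∫ r in Ioo (0 : ℝ) z, Real.sqrt (2 / m r))
      {z : ℝ | 0 ≤ z ∧ (z : EReal) ≤ S} ∧
    StrictMonoOn (fun z => ∫ r in Ioo (0 : ℝ) z, Real.sqrt (2 / m r))
      {z : ℝ | 0 ≤ z ∧ (z : EReal) ≤ S} := by
  have hSbot : S ≠ ⊥ := by
    intro h; rw [h] at hS; exact not_lt_bot hS
  set g : ℝ → ℝ := fun r => Real.sqrt (2 / m r) with hgdef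
  set U : Set ℝ := {z : ℝ | 0 < z ∧ (z : EReal) < S} with hUdef
  have hUopen : IsOpen U := by
    have : U = Ioi (0:ℝ) ∩ (((↑) : ℝ → EReal) ⁻¹' Iio S) := rfl
    rw [this]
    exact isOpen_Ioi.inter (isOpen_Iio.preimage continuous_coe_real_ereal)
  have hUconv : Convex ℝ U := by
    rw [convex_iff_ordConnected]
    constructor
    intro x hx y hy z hz
    exact ⟨lt_of_lt_of_le hx.1 hz.1,
      lt_of_le_of_lt (EReal.coe_le_coe_iff.2 hz.2) hy.2⟩
  have hmc : ContinuousOn m U := hm_c2.continuousOn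
  have hmd : DifferentiableOn ℝ m U := hm_c2.differentiableOn (by norm_num)
  have hmd2 : DifferentiableOn ℝ (deriv m) U :=
    (hm_c2.deriv_of_isOpen hUopen (m := 1) (by norm_num)).differentiableOn one_ne_zero
  have hconc : ConcaveOn ℝ U m := by
    apply concaveOn_of_deriv2_nonpos' hUconv hmd hmd2
    intro x hx
    simpa only [Function.iterate_succ_apply', Function.iterate_one, Function.iterate_zero, id_eq] using
      hm_conc x hx.1 hx.2
  -- lower bound near 0
  have key0 : ∀ z : ℝ, 0 < z → (z : EReal) < S → ∀ r ∈ Ioo (0:ℝ) z,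
      r / z * m z ≤ m r := by
    intro z hz hzS r hr
    obtain ⟨hr0, hrz⟩ := hr
    have hzU : z ∈ U := ⟨hz, hzS⟩
    have htend : Tendsto (fun ε : ℝ => (r - ε) / (z - ε) * m z) (𝓝[>] 0)
        (𝓝 (r / z * m z)) := by
      have hct : ContinuousAt (fun ε : ℝ => (r - ε) / (z - ε) * m z) 0 := by
        apply ContinuousAt.mul _ continuousAt_const
        exact ContinuousAt.div (by fun_prop) (by fun_prop) (by simpa using hz.ne')
      simpa using hct.tendsto.mono_left nhdsWithin_le_nhds
    refine le_of_tendsto htend ?_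
    filter_upwards [Ioo_mem_nhdsGT_of_mem (⟨le_refl 0, hr0⟩ : (0:ℝ) ∈ Ico (0:ℝ) r)]
      with ε hε
    obtain ⟨hε0, hεr⟩ := hε
    have hεU : ε ∈ U := ⟨hε0, lt_trans (EReal.coe_lt_coe_iff.2 (hεr.trans hrz)) hzS⟩
    have hzε : 0 < z - ε := by linarith
    have ha : (0:ℝ) ≤ (z - r) / (z - ε) := div_nonneg (by linarith) hzε.le
    have hb : (0:ℝ) ≤ (r - ε) / (z - ε) := div_nonneg (by linarith) hzε.le
    have hab : (z - r) / (z - ε) + (r - ε) / (z - ε) = 1 := by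
      rw [← add_div, div_eq_one_iff_eq hzε.ne']; ring
    have hcc := hconc.2 hεU hzU ha hb hab
    have hcomb : ((z - r) / (z - ε)) • ε + ((r - ε) / (z - ε)) • z = r := by
      simp only [smul_eq_mul]
      rw [div_mul_eq_mul_div, div_mul_eq_mul_div, ← add_div,
        show (z - r) * ε + (r - ε) * z = r * (z - ε) by ring]
      exact mul_div_cancel_right₀ r hzε.ne'
    rw [hcomb] at hcc
    have hmε : (0:ℝ) ≤ (z - r) / (z - ε) * m ε :=
      mul_nonneg ha (hm_pos ε hε0 hεU.2).le
    simp only [smul_eq_mul] at hcc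
    linarith
  -- integrability near 0
  have hint : ∀ z : ℝ, 0 < z → (z : EReal) < S → IntegrableOn g (Ioo 0 z) := by
    intro z hz hzS
    have hmz := hm_pos z hz hzS
    set C := Real.sqrt (2 * z / m z) with hC
    have hsub : Ioo (0:ℝ) z ⊆ U := fun r hr =>
      ⟨hr.1, lt_trans (EReal.coe_lt_coe_iff.2 hr.2) hzS⟩
    have hgmeas : AEStronglyMeasurable g (volume.restrict (Ioo 0 z)) := by
      apply ContinuousOn.aestronglyMeasurable _ measurableSet_Ioo
      apply ContinuousOn.sqrt
      exact continuousOn_const.div (hmc.mono hsub)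
        (fun r hr => (hm_pos r (hsub hr).1 (hsub hr).2).ne')
    have hbound : ∀ r ∈ Ioo (0:ℝ) z, ‖g r‖ ≤ C * r ^ (-(1/2) : ℝ) := by
      intro r hr
      have hr0 := hr.1
      have hmr : 0 < m r := hm_pos r (hsub hr).1 (hsub hr).2
      have hlow : r / z * m z ≤ m r := key0 z hz hzS r hr
      have hlowpos : 0 < r / z * m z := by positivity
      rw [hgdef]
      rw [Real.norm_eq_abs, abs_of_nonneg (Real.sqrt_nonneg _)]
      have h1 : (2:ℝ) / m r ≤ 2 / (r / z * m z) := by gcongr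
      have h2 : (2:ℝ) / (r / z * m z) = (2 * z / m z) * r⁻¹ := by
        field_simp
      calc Real.sqrt (2 / m r) ≤ Real.sqrt (2 / (r / z * m z)) :=
            Real.sqrt_le_sqrt h1
        _ = Real.sqrt ((2 * z / m z) * r⁻¹) := by rw [h2]
        _ = C * Real.sqrt r⁻¹ := by
            rw [Real.sqrt_mul (by positivity) _]
        _ = C * r ^ (-(1/2) : ℝ) := by
            rw [Real.sqrt_inv, Real.rpow_neg hr0.le,
              ← Real.sqrt_eq_rpow]
    have hCint : IntegrableOn (fun r : ℝ => C * r ^ (-(1/2) : ℝ)) (Ioo 0 z) := by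
      exact ((intervalIntegral.integrableOn_Ioo_rpow_iff hz).mpr (by norm_num)).const_mul C
    exact hCint.mono' hgmeas
      ((ae_restrict_iff' measurableSet_Ioo).2 (ae_of_all _ hbound))
  -- integrability up to S when S finite
  have hintS : S ≠ ⊤ → IntegrableOn g (Ioo 0 S.toReal) := by
    intro hTop
    set T := S.toReal with hT
    have hST : ((T : ℝ) : EReal) = S := EReal.coe_toReal hTop hSbot
    have hT0 : 0 < T := by
      have h := hS
      rw [← hST] at h
      exact_mod_cast h
    set c := T / 2 with hc
    have hc0 : 0 < c := by positivity
    have hcT : c < T := by rw [hc]; linarith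
    have hcS : (c : EReal) < S := by rw [← hST]; exact_mod_cast hcT
    have hcU : c ∈ U := ⟨hc0, hcS⟩
    have hmcpos := hm_pos c hc0 hcS
    have h1 : IntegrableOn g (Ioo 0 c) := hint c hc0 hcS
    -- lower bound near T
    have keyT : ∀ r ∈ Ioo c T, (T - r) / (T - c) * m c ≤ m r := by
      intro r hr
      obtain ⟨hcr, hrT⟩ := hr
      have hrU : r ∈ U := ⟨hc0.trans hcr, by rw [← hST]; exact_mod_cast hrT⟩
      have hTc : 0 < T - c := by linarith
      have htend : Tendsto (fun ε : ℝ => (ε - r) / (ε - c) * m c) (𝓝[<] T)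
          (𝓝 ((T - r) / (T - c) * m c)) := by
        have hct : ContinuousAt (fun ε : ℝ => (ε - r) / (ε - c) * m c) T := by
          apply ContinuousAt.mul _ continuousAt_const
          exact ContinuousAt.div (by fun_prop) (by fun_prop) (by simpa using hTc.ne')
        exact hct.tendsto.mono_left nhdsWithin_le_nhds
      refine le_of_tendsto htend ?_
      filter_upwards [Ioo_mem_nhdsLT_of_mem (⟨hrT, le_refl T⟩ : T ∈ Ioc r T)]
        with ε hε
      obtain ⟨hrε, hεT⟩ := hε
      have hεU : ε ∈ U := ⟨hc0.trans (hcr.trans hrε), by rw [← hST]; exact_mod_cast hεT⟩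
      have hεc : 0 < ε - c := by linarith
      have ha : (0:ℝ) ≤ (ε - r) / (ε - c) := div_nonneg (by linarith) hεc.le
      have hb : (0:ℝ) ≤ (r - c) / (ε - c) := div_nonneg (by linarith) hεc.le
      have hab : (ε - r) / (ε - c) + (r - c) / (ε - c) = 1 := by
        rw [← add_div, div_eq_one_iff_eq hεc.ne']; ring
      have hcc := hconc.2 hcU hεU ha hb hab
      have hcomb : ((ε - r) / (ε - c)) • c + ((r - c) / (ε - c)) • ε = r := by
        simp only [smul_eq_mul]
        rw [div_mul_eq_mul_div, div_mul_eq_mul_div, ← add_div,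
          show (ε - r) * c + (r - c) * ε = r * (ε - c) by ring]
        exact mul_div_cancel_right₀ r hεc.ne'
      rw [hcomb] at hcc
      have hmε : (0:ℝ) ≤ (r - c) / (ε - c) * m ε :=
        mul_nonneg hb (hm_pos ε hεU.1 hεU.2).le
      simp only [smul_eq_mul] at hcc
      linarith
    have hsub2 : Ioo c T ⊆ U := fun r hr =>
      ⟨hc0.trans hr.1, by rw [← hST]; exact_mod_cast hr.2⟩
    have h2 : IntegrableOn g (Ioo c T) := by
      set C2 := Real.sqrt (2 * (T - c) / m c) with hC2
      have hgmeas : AEStronglyMeasurable g (volume.restrict (Ioo c T)) := by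
        apply ContinuousOn.aestronglyMeasurable _ measurableSet_Ioo
        apply ContinuousOn.sqrt
        exact continuousOn_const.div (hmc.mono hsub2)
          (fun r hr => (hm_pos r (hsub2 hr).1 (hsub2 hr).2).ne')
      have hTc : 0 < T - c := by linarith
      have hbound : ∀ r ∈ Ioo c T, ‖g r‖ ≤ C2 * (T - r) ^ (-(1/2) : ℝ) := by
        intro r hr
        have hTr : 0 < T - r := by linarith [hr.2]
        have hmr : 0 < m r := hm_pos r (hsub2 hr).1 (hsub2 hr).2
        have hlow : (T - r) / (T - c) * m c ≤ m r := keyT r hr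
        have hlowpos : 0 < (T - r) / (T - c) * m c := by positivity
        rw [hgdef]
        rw [Real.norm_eq_abs, abs_of_nonneg (Real.sqrt_nonneg _)]
        have hineq : (2:ℝ) / m r ≤ 2 / ((T - r) / (T - c) * m c) := by
          gcongr
        have harg : (2:ℝ) / ((T - r) / (T - c) * m c)
            = (2 * (T - c) / m c) * (T - r)⁻¹ := by
          field_simp
        calc Real.sqrt (2 / m r)
            ≤ Real.sqrt (2 / ((T - r) / (T - c) * m c)) := Real.sqrt_le_sqrt hineq
          _ = Real.sqrt ((2 * (T - c) / m c) * (T - r)⁻¹) := by rw [harg]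
          _ = C2 * Real.sqrt (T - r)⁻¹ := by rw [Real.sqrt_mul (by positivity) _]
          _ = C2 * (T - r) ^ (-(1/2) : ℝ) := by
              rw [Real.sqrt_inv, Real.rpow_neg hTr.le, ← Real.sqrt_eq_rpow]
      have hCint : IntegrableOn (fun r : ℝ => C2 * (T - r) ^ (-(1/2) : ℝ))
          (Ioo c T) := by
        have hb1 : IntervalIntegrable (fun x : ℝ => x ^ (-(1/2) : ℝ)) volume 0 (T - c) :=
          intervalIntegral.intervalIntegrable_rpow' (by norm_num)
        have hb2 := (hb1.comp_sub_left T).symm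
        simp only [sub_zero, sub_sub_cancel] at hb2
        rw [intervalIntegrable_iff_integrableOn_Ioo_of_le hcT.le] at hb2
        exact hb2.const_mul C2
      exact hCint.mono' hgmeas
        ((ae_restrict_iff' measurableSet_Ioo).2 (ae_of_all _ hbound))
    have hunion : Ioo (0:ℝ) c ∪ Ico c T = Ioo 0 T := Ioo_union_Ico_eq_Ioo hc0 hcT.le
    rw [← hunion]
    exact h1.union ((integrableOn_Ico_iff_integrableOn_Ioo).2 h2)
  -- integrability on Ioc 0 v for any v in the domain
  have hB : ∀ v : ℝ, 0 ≤ v → (v : EReal) ≤ S → IntegrableOn g (Ioc 0 v) := by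
    intro v hv0 hvS
    rcases eq_or_lt_of_le hv0 with h0 | hv0'
    · rw [← h0, Ioc_self]; exact integrableOn_empty
    · rcases lt_or_eq_of_le hvS with hlt | heq
      · rw [integrableOn_Ioc_iff_integrableOn_Ioo]
        exact hint v hv0' hlt
      · have hTop : S ≠ ⊤ := by rw [← heq]; exact EReal.coe_ne_top v
        have hTv : S.toReal = v := by rw [← heq, EReal.toReal_coe]
        rw [integrableOn_Ioc_iff_integrableOn_Ioo, ← hTv]
        exact hintS hTop
  have heqF : (fun z : ℝ => ∫ r in Ioo (0:ℝ) z, g r)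
      = fun x : ℝ => ∫ t in Ioc (0:ℝ) x, g t :=
    funext fun x => integral_Ioc_eq_integral_Ioo.symm
  refine ⟨hint, hintS, ?_, ?_⟩
  · -- continuity
    by_cases hTop : S = ⊤
    · intro z₀ hz₀
      obtain ⟨hz₀0, -⟩ := hz₀
      have hb : (((z₀ + 1 : ℝ)) : EReal) < S := by
        rw [hTop]; exact EReal.coe_lt_top _
      have hI : IntegrableOn g (Icc 0 (z₀ + 1)) :=
        (integrableOn_Icc_iff_integrableOn_Ioo).2 (hint _ (by linarith) hb)
      have hcont := intervalIntegral.continuousOn_primitive (f := g) (μ := volume) hI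
      rw [heqF]
      have hmem : Icc (0:ℝ) (z₀ + 1) ∈ 𝓝[{z : ℝ | 0 ≤ z ∧ (z : EReal) ≤ S}] z₀ := by
        rw [mem_nhdsWithin]
        refine ⟨Iio (z₀ + 1), isOpen_Iio, by simp, ?_⟩
        rintro x ⟨hx1, hx2⟩
        exact ⟨hx2.1, le_of_lt hx1⟩
      exact (hcont.continuousWithinAt ⟨hz₀0, by linarith⟩).mono_of_mem_nhdsWithin hmem
    · have hST : ((S.toReal : ℝ) : EReal) = S := EReal.coe_toReal hTop hSbot
      have hI : IntegrableOn g (Icc 0 S.toReal) :=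
        (integrableOn_Icc_iff_integrableOn_Ioo).2 (hintS hTop)
      have hcont := intervalIntegral.continuousOn_primitive (f := g) (μ := volume) hI
      rw [heqF]
      apply hcont.mono
      intro x hx
      refine ⟨hx.1, ?_⟩
      have := hx.2
      rw [← hST] at this
      exact_mod_cast this
  · -- strict monotonicity
    intro u hu v hv huv
    have hIv : IntegrableOn g (Ioc 0 v) := hB v hv.1 hv.2
    have hIuv : IntegrableOn g (Ioc u v) := hIv.mono_set (Ioc_subset_Ioc_left hu.1)
    have hIu : IntegrableOn g (Ioc 0 u) := hIv.mono_set (Ioc_subset_Ioc_right huv.le)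
    have hsplit : ∫ r in Ioc (0:ℝ) v, g r
        = (∫ r in Ioc (0:ℝ) u, g r) + ∫ r in Ioc u v, g r := by
      rw [← setIntegral_union (Ioc_disjoint_Ioc_of_le le_rfl) measurableSet_Ioc hIu hIuv,
        Ioc_union_Ioc_eq_Ioc hu.1 huv.le]
    have hpos : 0 < ∫ r in Ioc u v, g r := by
      have hii : IntervalIntegrable g volume u v :=
        (intervalIntegrable_iff_integrableOn_Ioc_of_le huv.le).2 hIuv
      have hgp : ∀ x ∈ Ioo u v, 0 < g x := by
        intro x hx
        have hx0 : 0 < x := lt_of_le_of_lt hu.1 hx.1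
        have hxS : (x : EReal) < S :=
          lt_of_lt_of_le (EReal.coe_lt_coe_iff.2 hx.2) hv.2
        exact Real.sqrt_pos.2 (div_pos two_pos (hm_pos x hx0 hxS))
      have := intervalIntegral.intervalIntegral_pos_of_pos_on hii hgp huv
      rwa [intervalIntegral.integral_of_le huv.le] at this
    show (∫ r in Ioo (0:ℝ) u, g r) < ∫ r in Ioo (0:ℝ) v, g r
    rw [show (∫ r in Ioo (0:ℝ) u, g r) = ∫ r in Ioc (0:ℝ) u, g r from
        integral_Ioc_eq_integral_Ioo.symm,
      show (∫ r in Ioo (0:ℝ) v, g r) = ∫ r in Ioc (0:ℝ) v, g r from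
        integral_Ioc_eq_integral_Ioo.symm,
      hsplit]
    linarith
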